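/- Let q be an odd positive integer, M a positive integer with gcd(q, M) = 1, D and r integers, and δ ∈ {+1, -1}. Then Σ_{v mod q, v^2 ≡ 1 (mod q)} e( ⎯M·D·v/q + δ·⎯q·r^2/M ) = Σ_{(a,b): a,b ≥ 1, ab = q, gcd(a,b)=1} e( ⎯M·D·⎯a/b − ⎯M·D·⎯b/a + δ·⎯(ab)·r^2/M ), where ⎯M denotes an integer inverse of M modulo q (respectively modulo b or modulo a in the corresponding terms), ⎯q and ⎯(ab) denote integer inverses of q = ab modulo M, ⎯a an inverse of a modulo b, and ⎯b an inverse of b modulo a; each summand is independent of the choices of inverses. -/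

import Mathlib

open Finset

/-- `e(x) = exp(2πix)`. -/
noncomputable def e (x : ℝ) : ℂ := Complex.exp (2 * Real.pi * Complex.I * x)

/-- A canonical integer inverse of `x` modulo `c`. -/
noncomputable def zinv (c : ℕ) (x : ℤ) : ℤ := (((x : ZMod c)⁻¹).val : ℤ)

/-- The Kloosterman-type sum `H^δ_{m,c}(n,r)`. -/
noncomputable def Hkl (δ : ℤ) (m c : ℕ) (n r : ℤ) : ℂ :=
  ∑ ρ ∈ Finset.range c,
    if Nat.Coprime ρ c then
      e (((n * (zinv c (ρ : ℤ) + (ρ : ℤ)) : ℤ) : ℝ) / (c : ℝ)) *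
        ∑ l ∈ Finset.range c,
          e ((((m : ℤ) * zinv c (ρ : ℤ) * (l : ℤ) ^ 2 +
              r * (zinv c (ρ : ℤ) + δ) * (l : ℤ) : ℤ) : ℝ) / (c : ℝ))
    else 0

/-- `ε_c = 1` for `c ≡ 1 mod 4` and `ε_c = i` for `c ≡ 3 mod 4`. -/
noncomputable def epsC (c : ℕ) : ℂ := if c % 4 = 1 then 1 else Complex.I

/-- The classical Kloosterman sum `S(u,v;c)`. -/
noncomputable def Kl (u v : ℤ) (c : ℕ) : ℂ :=
  ∑ x ∈ Finset.range c,
    if Nat.Coprime x c then e (((u * (x : ℤ) + v * zinv c (x : ℤ) : ℤ) : ℝ) / (c : ℝ)) else 0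

/-- Fundamental discriminant. -/
def IsFundamentalDiscriminant (D : ℤ) : Prop :=
  (D % 4 = 1 ∧ Squarefree D) ∨
    (∃ d : ℤ, D = 4 * d ∧ (d % 4 = 2 ∨ d % 4 = 3) ∧ Squarefree d)



lemma e_add (x y : ℝ) : e (x + y) = e x * e y := by
  rw [e, e, e, ← Complex.exp_add]; push_cast; ring_nf

lemma e_int (n : ℤ) : e n = 1 := by
  rw [e]
  rw [show (2 * Real.pi * Complex.I * ((n:ℝ):ℂ) : ℂ) = n * (2 * Real.pi * Complex.I) by push_cast; ring]
  exact Complex.exp_int_mul_two_pi_mul_I n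

lemma e_congr {c : ℕ} (hc : c ≠ 0) {m n : ℤ} (h : (c:ℤ) ∣ m - n) :
    e ((m:ℝ) / c) = e ((n:ℝ) / c) := by
  obtain ⟨k, hk⟩ := h
  have hm : (m:ℝ) = n + c * k := by
    have : m = n + c * k := by linarith [hk]
    exact_mod_cast congrArg (Int.cast : ℤ → ℝ) this
  have hc' : (c:ℝ) ≠ 0 := Nat.cast_ne_zero.2 hc
  have : (m:ℝ)/c = (n:ℝ)/c + k := by field_simp [hm]; linear_combination hm
  rw [this, e_add, e_int, mul_one]

lemma zinv_cast {c : ℕ} [NeZero c] (x : ℤ) : ((zinv c x : ℤ) : ZMod c) = (x : ZMod c)⁻¹ := by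
  simp [zinv, ZMod.natCast_val, ZMod.intCast_zmod_cast]

lemma zinv_mul {c : ℕ} [NeZero c] {x : ℤ} (h : IsUnit (x : ZMod c)) :
    ((x : ZMod c)) * ((zinv c x : ℤ) : ZMod c) = 1 := by
  rw [zinv_cast, ZMod.mul_inv_of_unit _ h]

lemma zinv_dvd_spec {c d : ℕ} [NeZero c] (hdc : d ∣ c) {x : ℤ} (h : IsUnit (x : ZMod c)) :
    ((x * zinv c x - 1 : ℤ) : ZMod d) = 0 := by
  have h1 : ((x * zinv c x - 1 : ℤ) : ZMod c) = 0 := by push_cast; rw [zinv_mul h]; ring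
  have h2 : (d:ℤ) ∣ x * zinv c x - 1 :=
    dvd_trans (Int.natCast_dvd_natCast.2 hdc) ((ZMod.intCast_zmod_eq_zero_iff_dvd _ _).1 h1)
  exact (ZMod.intCast_zmod_eq_zero_iff_dvd _ _).2 h2

lemma zinv_mul_of_dvd {c d : ℕ} [NeZero c] (hdc : d ∣ c) {x : ℤ} (h : IsUnit (x : ZMod c)) :
    (x : ZMod d) * ((zinv c x : ℤ) : ZMod d) = 1 := by
  have := zinv_dvd_spec hdc h
  push_cast at this
  linear_combination this

lemma inv_unique' {R : Type*} [CommRing R] {u x y : R} (hx : u * x = 1) (hy : u * y = 1) : x = y := by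
  calc x = x * (u * y) := by rw [hy, mul_one]
  _ = y * (u * x) := by ring
  _ = y := by rw [hx, mul_one]

lemma crt_dvd {a b : ℕ} (hco : Nat.Coprime a b) {x : ℤ}
    (hxa : ((x:ℤ) : ZMod a) = 0) (hxb : ((x:ℤ) : ZMod b) = 0) : ((a*b : ℕ):ℤ) ∣ x := by
  have h1 : (a:ℤ) ∣ x := (ZMod.intCast_zmod_eq_zero_iff_dvd _ _).1 hxa
  have h2 : (b:ℤ) ∣ x := (ZMod.intCast_zmod_eq_zero_iff_dvd _ _).1 hxb
  have := (Nat.isCoprime_iff_coprime.2 hco).mul_dvd h1 h2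
  simpa using this

lemma main_congr (q M a b : ℕ) [NeZero q] [NeZero M] (hab : a * b = q) (ha : 0 < a) (hb : 0 < b)
    (hco : Nat.Coprime a b) (hcop : Nat.Coprime q M) (D v : ℤ)
    (hva : ((v + 1 : ℤ) : ZMod a) = 0) (hvb : ((v - 1 : ℤ) : ZMod b) = 0) :
    (q:ℤ) ∣ zinv q M * D * v -
      (zinv b (M:ℤ) * D * zinv b (a:ℤ) * a - zinv a (M:ℤ) * D * zinv a (b:ℤ) * b) := by
  haveI : NeZero a := ⟨ha.ne'⟩
  haveI : NeZero b := ⟨hb.ne'⟩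
  have haq : a ∣ q := ⟨b, hab.symm⟩
  have hbq : b ∣ q := ⟨a, (mul_comm a b ▸ hab).symm⟩
  have hMq : IsUnit (((M:ℤ)) : ZMod q) := by
    rw [Int.cast_natCast]; exact (ZMod.isUnit_iff_coprime M q).2 (hcop.symm)
  have hMa : IsUnit (((M:ℤ)) : ZMod a) := by
    rw [Int.cast_natCast]
    exact (ZMod.isUnit_iff_coprime M a).2 ((Nat.Coprime.coprime_dvd_left haq hcop).symm)
  have hMb : IsUnit (((M:ℤ)) : ZMod b) := by
    rw [Int.cast_natCast]
    exact (ZMod.isUnit_iff_coprime M b).2 ((Nat.Coprime.coprime_dvd_left hbq hcop).symm)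
  have hBa : IsUnit (((b:ℤ)) : ZMod a) := by
    rw [Int.cast_natCast]; exact (ZMod.isUnit_iff_coprime b a).2 hco.symm
  have hAb : IsUnit (((a:ℤ)) : ZMod b) := by
    rw [Int.cast_natCast]; exact (ZMod.isUnit_iff_coprime a b).2 hco
  rw [show (q:ℤ) = ((a*b:ℕ):ℤ) by rw [hab]]
  apply crt_dvd hco
  · have e1 : ((zinv q (M:ℤ) : ℤ) : ZMod a) = ((zinv a (M:ℤ) : ℤ) : ZMod a) :=
      inv_unique' (zinv_mul_of_dvd haq hMq) (zinv_mul hMa)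
    have hb1 : (((b:ℤ)) : ZMod a) * ((zinv a (b:ℤ) : ℤ) : ZMod a) = 1 := zinv_mul hBa
    have hva' : ((v:ℤ) : ZMod a) = -1 := by
      push_cast at hva; linear_combination hva
    have ha0 : (((a:ℤ)) : ZMod a) = 0 := by push_cast; exact ZMod.natCast_self a
    push_cast
    push_cast at e1 hb1 ha0
    linear_combination D * ((v:ℤ) : ZMod a) * e1 + ((zinv a (M:ℤ) : ℤ) : ZMod a) * D * hva'
      + ((zinv a (M:ℤ) : ℤ) : ZMod a) * D * hb1
      - ((zinv b (M:ℤ) : ℤ) : ZMod a) * D * ((zinv b (a:ℤ) : ℤ) : ZMod a) * ha0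
  · have e1 : ((zinv q (M:ℤ) : ℤ) : ZMod b) = ((zinv b (M:ℤ) : ℤ) : ZMod b) :=
      inv_unique' (zinv_mul_of_dvd hbq hMq) (zinv_mul hMb)
    have ha1 : (((a:ℤ)) : ZMod b) * ((zinv b (a:ℤ) : ℤ) : ZMod b) = 1 := zinv_mul hAb
    have hvb' : ((v:ℤ) : ZMod b) = 1 := by
      push_cast at hvb; linear_combination hvb
    have hb0 : (((b:ℤ)) : ZMod b) = 0 := by push_cast; exact ZMod.natCast_self b
    push_cast
    push_cast at e1 ha1 hb0
    linear_combination D * ((v:ℤ) : ZMod b) * e1 + ((zinv b (M:ℤ) : ℤ) : ZMod b) * D * hvb'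
      - ((zinv b (M:ℤ) : ℤ) : ZMod b) * D * ha1
      + ((zinv a (M:ℤ) : ℤ) : ZMod b) * D * ((zinv a (b:ℤ) : ℤ) : ZMod b) * hb0

lemma W_add_one (a b : ℕ) (ha : 0 < a) (hb : 0 < b) (hco : Nat.Coprime a b) :
    (a:ℤ) ∣ ((a:ℤ) * zinv b (a:ℤ) - (b:ℤ) * zinv a ((b:ℕ):ℤ) + 1) := by
  haveI : NeZero a := ⟨ha.ne'⟩
  have hBa : IsUnit (((b:ℤ)) : ZMod a) := by
    rw [Int.cast_natCast]; exact (ZMod.isUnit_iff_coprime b a).2 hco.symm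
  have h1 : (a:ℤ) ∣ ((b:ℤ) * zinv a ((b:ℕ):ℤ) - 1) := by
    have h0 : (((b:ℤ) * zinv a ((b:ℕ):ℤ) - 1 : ℤ) : ZMod a) = 0 := by
      have key := zinv_mul hBa
      push_cast
      push_cast at key
      linear_combination key
    exact (ZMod.intCast_zmod_eq_zero_iff_dvd _ _).1 h0
  have h2 : (a:ℤ) ∣ (a:ℤ) * zinv b (a:ℤ) := dvd_mul_right _ _
  have := dvd_sub h2 h1
  convert this using 1; rfl; ring

lemma W_sub_one (a b : ℕ) (ha : 0 < a) (hb : 0 < b) (hco : Nat.Coprime a b) :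
    (b:ℤ) ∣ ((a:ℤ) * zinv b (a:ℤ) - (b:ℤ) * zinv a ((b:ℕ):ℤ) - 1) := by
  haveI : NeZero b := ⟨hb.ne'⟩
  have hAb : IsUnit (((a:ℤ)) : ZMod b) := by
    rw [Int.cast_natCast]; exact (ZMod.isUnit_iff_coprime a b).2 hco
  have h1 : (b:ℤ) ∣ ((a:ℤ) * zinv b ((a:ℕ):ℤ) - 1) := by
    have h0 : (((a:ℤ) * zinv b ((a:ℕ):ℤ) - 1 : ℤ) : ZMod b) = 0 := by
      have key := zinv_mul hAb
      push_cast
      push_cast at key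
      linear_combination key
    exact (ZMod.intCast_zmod_eq_zero_iff_dvd _ _).1 h0
  have h2 : (b:ℤ) ∣ (b:ℤ) * zinv a ((b:ℕ):ℤ) := dvd_mul_right _ _
  have := dvd_sub h1 h2
  convert this using 1; rfl; ring

lemma coprime_odd (q a' b' : ℕ) (hodd : Odd q) (ha' : a' ∣ q) (hb' : b' ∣ q) (X : ℤ)
    (h1 : (a':ℤ) ∣ X + 1) (h2 : (b':ℤ) ∣ X - 1) : Nat.Coprime a' b' := by
  set d := Nat.gcd a' b' with hd
  have d1 : (d:ℤ) ∣ X + 1 := dvd_trans (Int.natCast_dvd_natCast.2 (Nat.gcd_dvd_left _ _)) h1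
  have d2 : (d:ℤ) ∣ X - 1 := dvd_trans (Int.natCast_dvd_natCast.2 (Nat.gcd_dvd_right _ _)) h2
  have hd2 : (d:ℤ) ∣ 2 := by
    have := dvd_sub d1 d2
    simpa using this
  have hd2' : d ∣ 2 := by exact_mod_cast hd2
  have hdq : d ∣ q := (Nat.gcd_dvd_left _ _).trans ha'
  have hdo : Odd d := by
    rcases Nat.even_or_odd d with he | ho
    · exfalso
      obtain ⟨k, hk⟩ := he
      have h2d : 2 ∣ d := ⟨k, by omega⟩
      exact (Nat.not_even_iff_odd.2 hodd) (by obtain ⟨m, hm⟩ := h2d.trans hdq; exact ⟨m, by omega⟩)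
    · exact ho
  exact Nat.Coprime.eq_one_of_dvd (Nat.coprime_two_right.2 hdo) hd2'

lemma div_gcd_dvd_sub_one (q v : ℕ) (hq : 0 < q) (hdvd : (q:ℤ) ∣ ((v:ℤ)+1)*((v:ℤ)-1)) :
    ((q / Nat.gcd q (v+1) : ℕ) : ℤ) ∣ (v:ℤ) - 1 := by
  set g := Nat.gcd q (v+1) with hgdef
  have hg : 0 < g := Nat.gcd_pos_of_pos_left _ hq
  have hgq : g ∣ q := Nat.gcd_dvd_left _ _
  have hgv : g ∣ v + 1 := Nat.gcd_dvd_right _ _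
  have h1 : q = g * (q / g) := (Nat.mul_div_cancel' hgq).symm
  have h2 : v + 1 = g * ((v+1)/g) := (Nat.mul_div_cancel' hgv).symm
  have hco : Nat.Coprime (q/g) ((v+1)/g) := Nat.coprime_div_gcd_div_gcd hg
  have key : ((g:ℤ) * ((q/g : ℕ):ℤ)) ∣ ((g:ℤ) * (((v+1)/g : ℕ):ℤ)) * ((v:ℤ)-1) := by
    have e1 : ((g:ℤ) * ((q/g : ℕ):ℤ)) = (q:ℤ) := by exact_mod_cast congrArg (Nat.cast : ℕ → ℤ) h1.symm
    have e2 : ((g:ℤ) * (((v+1)/g : ℕ):ℤ)) = (v:ℤ) + 1 := by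
      have := congrArg (Nat.cast : ℕ → ℤ) h2.symm
      push_cast at this ⊢
      linarith
    rw [e1, e2]; exact hdvd
  have key2 : ((q/g : ℕ):ℤ) ∣ (((v+1)/g : ℕ):ℤ) * ((v:ℤ)-1) := by
    have hgz : (g:ℤ) ≠ 0 := by exact_mod_cast hg.ne'
    rw [mul_assoc] at key
    exact (mul_dvd_mul_iff_left hgz).1 key
  exact (Nat.isCoprime_iff_coprime.2 hco).dvd_of_dvd_mul_left key2

/-- Rewriting the sum over square roots of unity mod `q` as a sum over coprime
factorizations `q = ab`. -/
theorem statement12 (q M : ℕ) (hq : 0 < q) (hqodd : Odd q) (hM : 0 < M)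
    (hcop : Nat.Coprime q M) (D r δ : ℤ) (hδ : δ = 1 ∨ δ = -1) :
    (∑ v ∈ (Finset.range q).filter (fun v : ℕ => ((v : ZMod q)) ^ 2 = 1),
        e (((zinv q (M : ℤ) * D * (v : ℤ) : ℤ) : ℝ) / (q : ℝ) +
          ((δ * zinv M (q : ℤ) * r ^ 2 : ℤ) : ℝ) / (M : ℝ))) =
      ∑ a ∈ q.divisors.filter (fun a => Nat.Coprime a (q / a)),
        e (((zinv (q / a) (M : ℤ) * D * zinv (q / a) (a : ℤ) : ℤ) : ℝ) / ((q / a : ℕ) : ℝ) -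
          ((zinv a (M : ℤ) * D * zinv a ((q / a : ℕ) : ℤ) : ℤ) : ℝ) / ((a : ℕ) : ℝ) +
          ((δ * zinv M ((a * (q / a) : ℕ) : ℤ) * r ^ 2 : ℤ) : ℝ) / (M : ℝ)) := by
  have hq0 : q ≠ 0 := hq.ne'
  haveI : NeZero q := ⟨hq0⟩
  haveI : NeZero M := ⟨hM.ne'⟩
  -- basic facts for a divisor `a` in the index set
  have base : ∀ a ∈ q.divisors.filter (fun a => Nat.Coprime a (q / a)),
      a ∣ q ∧ 0 < a ∧ 0 < q / a ∧ a * (q / a) = q ∧ Nat.Coprime a (q / a) := by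
    intro a ha
    rw [Finset.mem_filter, Nat.mem_divisors] at ha
    obtain ⟨⟨haq, -⟩, hco⟩ := ha
    exact ⟨haq, Nat.pos_of_dvd_of_pos haq hq, Nat.div_pos (Nat.le_of_dvd hq haq)
      (Nat.pos_of_dvd_of_pos haq hq), Nat.mul_div_cancel' haq, hco⟩
  -- facts about the image point
  have ifacts : ∀ a, a ∣ q → Nat.Coprime a (q / a) →
      ∀ v : ℕ, (v : ℤ) = ((a:ℤ) * zinv (q/a) (a:ℤ) - ((q/a : ℕ):ℤ) * zinv a ((q/a : ℕ):ℤ)) % (q:ℤ) →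
      (a:ℤ) ∣ (v:ℤ) + 1 ∧ ((q/a : ℕ):ℤ) ∣ (v:ℤ) - 1 := by
    intro a haq hco v hv
    have ha : 0 < a := Nat.pos_of_dvd_of_pos haq hq
    have hb : 0 < q / a := Nat.div_pos (Nat.le_of_dvd hq haq) ha
    set W : ℤ := (a:ℤ) * zinv (q/a) (a:ℤ) - ((q/a : ℕ):ℤ) * zinv a ((q/a : ℕ):ℤ) with hW
    have hqvW : (q:ℤ) ∣ (v:ℤ) - W := by
      rw [hv, Int.emod_def]
      exact ⟨-(W / q), by ring⟩
    have havW : (a:ℤ) ∣ (v:ℤ) - W := dvd_trans (Int.natCast_dvd_natCast.2 haq) hqvW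
    have hbvW : ((q/a:ℕ):ℤ) ∣ (v:ℤ) - W := dvd_trans (Int.natCast_dvd_natCast.2 (Nat.div_dvd_of_dvd haq)) hqvW
    constructor
    · have := dvd_add havW (W_add_one a (q/a) ha hb hco)
      convert this using 1; rfl; ring
    · have := dvd_add hbvW (W_sub_one a (q/a) ha hb hco)
      convert this using 1; rfl; ring
  refine (Finset.sum_nbij'
    (i := fun a : ℕ => (((a:ℤ) * zinv (q/a) (a:ℤ) - ((q/a : ℕ):ℤ) * zinv a ((q/a : ℕ):ℤ)) % (q:ℤ)).toNat)
    (j := fun v => Nat.gcd q (v+1)) ?_ ?_ ?_ ?_ ?_).symm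
  · -- i maps into the target set
    intro a ha
    obtain ⟨haq, ha0, hb0, hab, hco⟩ := base a ha
    set W : ℤ := (a:ℤ) * zinv (q/a) (a:ℤ) - ((q/a : ℕ):ℤ) * zinv a ((q/a : ℕ):ℤ) with hWdef
    set v : ℕ := (W % (q:ℤ)).toNat with hvdef
    have hvv : (v:ℤ) = W % q := Int.toNat_of_nonneg (Int.emod_nonneg _ (by exact_mod_cast hq0))
    obtain ⟨h1, h2⟩ := ifacts a haq hco v hvv
    rw [Finset.mem_filter, Finset.mem_range]
    constructor
    · have : (v:ℤ) < q := by rw [hvv]; exact Int.emod_lt_of_pos _ (by exact_mod_cast hq)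
      exact_mod_cast this
    · have hd : (q:ℤ) ∣ (v:ℤ)^2 - 1 := by
        have := mul_dvd_mul h1 h2
        rw [show ((a:ℤ)) * ((q/a:ℕ):ℤ) = (q:ℤ) by exact_mod_cast congrArg (Nat.cast : ℕ → ℤ) hab] at this
        convert this using 1; rfl; ring
      have : (((v:ℤ)^2 - 1 : ℤ) : ZMod q) = 0 := (ZMod.intCast_zmod_eq_zero_iff_dvd _ _).2 hd
      push_cast at this
      linear_combination this
  · -- j maps into the source set
    intro v hv
    rw [Finset.mem_filter, Finset.mem_range] at hv
    obtain ⟨hvq, hv1⟩ := hv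
    have hd : (q:ℤ) ∣ ((v:ℤ)+1)*((v:ℤ)-1) := by
      have : (((v:ℤ)^2 - 1 : ℤ) : ZMod q) = 0 := by push_cast; linear_combination hv1
      have := (ZMod.intCast_zmod_eq_zero_iff_dvd _ _).1 this
      convert this using 1; ring
    have hgq : Nat.gcd q (v+1) ∣ q := Nat.gcd_dvd_left _ _
    have hgv : (Nat.gcd q (v+1) : ℤ) ∣ (v:ℤ) + 1 := by
      have := Int.natCast_dvd_natCast.2 (Nat.gcd_dvd_right q (v+1))
      push_cast at this; convert this using 1
    rw [Finset.mem_filter, Nat.mem_divisors]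
    exact ⟨⟨hgq, hq0⟩, coprime_odd q _ _ hqodd hgq (Nat.div_dvd_of_dvd hgq) (v:ℤ) hgv
      (div_gcd_dvd_sub_one q v hq hd)⟩
  · -- left inverse
    intro a ha
    obtain ⟨haq, ha0, hb0, hab, hco⟩ := base a ha
    set W : ℤ := (a:ℤ) * zinv (q/a) (a:ℤ) - ((q/a : ℕ):ℤ) * zinv a ((q/a : ℕ):ℤ) with hWdef
    set v : ℕ := (W % (q:ℤ)).toNat with hvdef
    have hvv : (v:ℤ) = W % q := Int.toNat_of_nonneg (Int.emod_nonneg _ (by exact_mod_cast hq0))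
    obtain ⟨h1, h2⟩ := ifacts a haq hco v hvv
    have hav1 : a ∣ v + 1 := by
      have : (a:ℤ) ∣ ((v+1 : ℕ):ℤ) := by push_cast; convert h1 using 1
      exact_mod_cast this
    apply Nat.dvd_antisymm
    · -- gcd ∣ a
      have hgq : Nat.gcd q (v+1) ∣ q := Nat.gcd_dvd_left _ _
      have hgv : (Nat.gcd q (v+1) : ℤ) ∣ (v:ℤ) + 1 := by
        have := Int.natCast_dvd_natCast.2 (Nat.gcd_dvd_right q (v+1))
        push_cast at this; convert this using 1
      have hgb : Nat.Coprime (Nat.gcd q (v+1)) (q/a) :=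
        coprime_odd q _ _ hqodd hgq (Nat.div_dvd_of_dvd haq) (v:ℤ) hgv h2
      have : Nat.gcd q (v+1) ∣ a * (q/a) := by rw [hab]; exact hgq
      exact (Nat.Coprime.dvd_of_dvd_mul_right hgb this)
    · exact Nat.dvd_gcd haq hav1
  · -- right inverse
    intro v hv
    rw [Finset.mem_filter, Finset.mem_range] at hv
    obtain ⟨hvq, hv1⟩ := hv
    have hd : (q:ℤ) ∣ ((v:ℤ)+1)*((v:ℤ)-1) := by
      have : (((v:ℤ)^2 - 1 : ℤ) : ZMod q) = 0 := by push_cast; linear_combination hv1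
      have := (ZMod.intCast_zmod_eq_zero_iff_dvd _ _).1 this
      convert this using 1; ring
    set g : ℕ := Nat.gcd q (v+1) with hgdef
    have hgq : g ∣ q := Nat.gcd_dvd_left _ _
    have hg0 : 0 < g := Nat.gcd_pos_of_pos_left _ hq
    have hb0 : 0 < q / g := Nat.div_pos (Nat.le_of_dvd hq hgq) hg0
    have hgv : (g:ℤ) ∣ (v:ℤ) + 1 := by
      have := Int.natCast_dvd_natCast.2 (Nat.gcd_dvd_right q (v+1))
      push_cast at this; convert this using 1
    have hbv : ((q/g : ℕ):ℤ) ∣ (v:ℤ) - 1 := div_gcd_dvd_sub_one q v hq hd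
    have hco : Nat.Coprime g (q/g) :=
      coprime_odd q _ _ hqodd hgq (Nat.div_dvd_of_dvd hgq) (v:ℤ) hgv hbv
    set W : ℤ := (g:ℤ) * zinv (q/g) (g:ℤ) - ((q/g : ℕ):ℤ) * zinv g ((q/g : ℕ):ℤ) with hWdef
    have hWa : (g:ℤ) ∣ W + 1 := W_add_one g (q/g) hg0 hb0 hco
    have hWb : ((q/g:ℕ):ℤ) ∣ W - 1 := W_sub_one g (q/g) hg0 hb0 hco
    have hgWv : (g:ℤ) ∣ W - (v:ℤ) := by
      have := dvd_sub hWa hgv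
      convert this using 1; rfl; ring
    have hbWv : ((q/g:ℕ):ℤ) ∣ W - (v:ℤ) := by
      have := dvd_sub hWb hbv
      convert this using 1; rfl; ring
    have hqWv : (q:ℤ) ∣ W - (v:ℤ) := by
      have := (Nat.isCoprime_iff_coprime.2 hco).mul_dvd hgWv hbWv
      have he : ((g:ℤ)) * ((q/g:ℕ):ℤ) = (q:ℤ) := by
        exact_mod_cast congrArg (Nat.cast : ℕ → ℤ) (Nat.mul_div_cancel' hgq)
      rwa [he] at this
    have hmod : W % (q:ℤ) = ((v:ℕ):ℤ) := by
      have h1 : W % (q:ℤ) = ((v:ℕ):ℤ) % q :=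
        (((Int.modEq_iff_dvd.mpr hqWv) : (v:ℤ) ≡ W [ZMOD (q:ℤ)]).symm : W % (q:ℤ) = (v:ℤ) % q)
      rw [h1, Int.emod_eq_of_lt (by positivity) (by exact_mod_cast hvq)]
    rw [hmod]
    exact Int.toNat_natCast v
  · -- summand equality
    intro a ha
    obtain ⟨haq, ha0, hb0, hab, hco⟩ := base a ha
    set W : ℤ := (a:ℤ) * zinv (q/a) (a:ℤ) - ((q/a : ℕ):ℤ) * zinv a ((q/a : ℕ):ℤ) with hWdef
    set v : ℕ := (W % (q:ℤ)).toNat with hvdef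
    have hvv : (v:ℤ) = W % q := Int.toNat_of_nonneg (Int.emod_nonneg _ (by exact_mod_cast hq0))
    obtain ⟨h1, h2⟩ := ifacts a haq hco v hvv
    have hva : (((v:ℤ) + 1 : ℤ) : ZMod a) = 0 := (ZMod.intCast_zmod_eq_zero_iff_dvd _ _).2 h1
    have hvb : (((v:ℤ) - 1 : ℤ) : ZMod (q/a)) = 0 := (ZMod.intCast_zmod_eq_zero_iff_dvd _ _).2 h2
    have hdvd := main_congr q M a (q/a) hab ha0 hb0 hco hcop D (v:ℤ) hva hvb
    rw [Nat.mul_div_cancel' haq]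
    have hra : ((a:ℕ):ℝ) ≠ 0 := by positivity
    have hrb : (((q/a:ℕ)):ℝ) ≠ 0 := by positivity
    have hq' : (q:ℝ) = ((a:ℕ):ℝ) * ((q/a:ℕ):ℝ) := by exact_mod_cast congrArg (Nat.cast : ℕ → ℝ) hab.symm
    have harr : ((zinv (q / a) (M:ℤ) * D * zinv (q / a) (a:ℤ) : ℤ) : ℝ) / ((q / a : ℕ) : ℝ) -
          ((zinv a (M:ℤ) * D * zinv a ((q / a : ℕ) : ℤ) : ℤ) : ℝ) / ((a : ℕ) : ℝ) =
        ((zinv (q/a) (M:ℤ) * D * zinv (q/a) (a:ℤ) * (a:ℤ) -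
          zinv a (M:ℤ) * D * zinv a ((q/a:ℕ):ℤ) * ((q/a:ℕ):ℤ) : ℤ) : ℝ) / (q:ℝ) := by
      push_cast [-Int.natCast_div, -Int.natCast_ediv]
      rw [hq']
      field_simp
    rw [e_add, e_add, harr]
    congr 1
    exact (e_congr hq0 hdvd).symm
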